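/- Let q ≥ 3 and n ≥ 3. For every w ∈ CBFS_q(n) = A_q(n) ∪ B_q(n) ∪ C_q(n) and every w' ∈ C_q(n), no nonempty proper prefix of w is equal to a suffix of w'. -/
import Mathlib


/-- Value of a letter: 1 ↦ +1, 0 ↦ -1, other letters ↦ 0. -/
def mval (a : ℕ) : ℤ := if a = 1 then 1 else if a = 0 then -1 else 0

/-- Value-sum of a word. -/
def vsum (w : List ℕ) : ℤ := (w.map mval).sum

/-- A (q-2)-colored Motzkin word over the alphabet Z_q = {0,...,q-1}:
all letters < q, every prefix has nonnegative value-sum, total value-sum 0. -/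
def IsMotzkinWord (q : ℕ) (w : List ℕ) : Prop :=
  (∀ a ∈ w, a < q) ∧ (∀ u, u <+: w → 0 ≤ vsum u) ∧ vsum w = 0

/-- The set 𝓜_{q-2}(n) of (q-2)-colored Motzkin words of length n. -/
def MotzkinSet (q n : ℕ) : Set (List ℕ) := {w | w.length = n ∧ IsMotzkinWord q w}

/-- M_{q-2}(n), the number of (q-2)-colored Motzkin words of length n. -/
noncomputable def Mnum (q n : ℕ) : ℕ := (MotzkinSet q n).ncard

/-- The set Ê_{q-2}(n) of elevated (q-2)-colored Motzkin words of length n: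
words 1α0 with α ∈ 𝓜_{q-2}(n-2). -/
def ElevatedSet (q n : ℕ) : Set (List ℕ) :=
  {w | w.length = n ∧ ∃ α ∈ MotzkinSet q (n - 2), w = 1 :: (α ++ [0])}

/-- The set A_q(n). -/
def SetA (q n : ℕ) : Set (List ℕ) :=
  {w | ∃ i ≤ n / 2, ∃ α ∈ MotzkinSet q i, ∃ β ∈ ElevatedSet q (n - i), w = α ++ β} \
    {w | ∃ α ∈ ElevatedSet q (n / 2), ∃ β ∈ ElevatedSet q (n / 2), w = α ++ β}

/-- The set B_q(n). -/
def SetB (q n : ℕ) : Set (List ℕ) :=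
  {w | ∃ i ≤ n / 2 - 1, ∃ α ∈ MotzkinSet q i, ∃ β ∈ ElevatedSet q (n - i - 1),
    w = 1 :: (α ++ β)}

/-- The set C_q(n): words γ0 with γ a (q-2)-colored Motzkin word of length n-1
having no factor which is an elevated Motzkin word of length j ≥ ⌈n/2⌉. -/
def SetC (q n : ℕ) : Set (List ℕ) :=
  {w | ∃ γ ∈ MotzkinSet q (n - 1),
    (∀ j, (n + 1) / 2 ≤ j → ∀ β ∈ ElevatedSet q j, ¬ β <:+: γ) ∧ w = γ ++ [0]}

/-- The cross-bifix-free candidate set CBFS_q(n). -/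
def CBFS (q n : ℕ) : Set (List ℕ) := SetA q n ∪ SetB q n ∪ SetC q n

/-- A word is bifix-free if no nonempty proper prefix of it is also a suffix of it. -/
def BifixFree (w : List ℕ) : Prop :=
  ∀ u, u <+: w → u ≠ [] → u.length < w.length → ¬ u <:+ w

/-- BF_q(n): the set of bifix-free words of length n over Z_q. -/
def BF (q n : ℕ) : Set (List ℕ) := {w | w.length = n ∧ (∀ a ∈ w, a < q) ∧ BifixFree w}

/-- F_{k,q}(n): the number of words of length n over Z_q avoiding k consecutive 0's. -/
noncomputable def Fcount (k q n : ℕ) : ℕ :=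
  {w : List ℕ | w.length = n ∧ (∀ a ∈ w, a < q) ∧ ¬ List.replicate k 0 <:+: w}.ncard

/-- The set S_{k,q}(n) of Bajic--Stojanovic--Chee--Kiah type words: words s of length n
over Z_q with s₁ = ⋯ = s_k = 0, s_{k+1} ≠ 0, s_n ≠ 0, and such that the subword
s_{k+2} ⋯ s_{n-1} contains no k consecutive 0's. -/
def SetS (q k n : ℕ) : Set (List ℕ) :=
  {s | s.length = n ∧ (∀ a ∈ s, a < q) ∧ s.take k = List.replicate k 0 ∧
    s.getD k 0 ≠ 0 ∧ s.getLast? ≠ some 0 ∧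
    ¬ List.replicate k 0 <:+: (s.drop (k + 1)).take (n - k - 2)}


lemma vsum_append (a b : List ℕ) : vsum (a ++ b) = vsum a + vsum b := by
  simp [vsum]

lemma prefix_append_cases {u a b : List ℕ} (h : u <+: a ++ b) :
    u <+: a ∨ ∃ v, v <+: b ∧ u = a ++ v := by
  rcases le_or_gt u.length a.length with hle | hlt
  · exact Or.inl (List.prefix_of_prefix_length_le h (a.prefix_append b) hle)
  · right
    have ha : a <+: u := List.prefix_of_prefix_length_le (a.prefix_append b) h hlt.le
    obtain ⟨v, rfl⟩ := ha
    obtain ⟨t, ht⟩ := h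
    rw [List.append_assoc] at ht
    exact ⟨v, ⟨t, List.append_cancel_left ht⟩, rfl⟩

lemma elevated_prefix_nonneg {q n : ℕ} {w u : List ℕ} (hw : w ∈ ElevatedSet q n)
    (hu : u <+: w) : 0 ≤ vsum u := by
  obtain ⟨-, α, hα, rfl⟩ := hw
  cases u with
  | nil => simp [vsum]
  | cons a t =>
    rw [List.cons_prefix_cons] at hu
    obtain ⟨rfl, ht⟩ := hu
    have hα0 : vsum α = 0 := hα.2.2.2
    rcases prefix_append_cases ht with h1 | ⟨v, hv, rfl⟩
    · have := hα.2.2.1 t h1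
      simp [vsum, mval] at this ⊢
      linarith
    · have hv' : vsum v = 0 ∨ vsum v = -1 := by
        cases v with
        | nil => left; simp [vsum]
        | cons b tv =>
          rw [List.cons_prefix_cons] at hv
          obtain ⟨rfl, htv⟩ := hv
          right
          simp [List.prefix_nil] at htv
          simp [htv, vsum, mval]
      have : vsum (1 :: (α ++ v)) = 1 + vsum α + vsum v := by
        simp [vsum, mval]; ring
      rcases hv' with h | h <;> rw [this, hα0, h] <;> norm_num

/-- For w ∈ CBFS_q(n) and w' ∈ C_q(n), no nonempty proper prefix of w
equals a suffix of w'. -/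
theorem cbfs_vs_setC_no_cross_bifix (q n : ℕ) (hq : 3 ≤ q) (hn : 3 ≤ n)
    (w w' : List ℕ) (hw : w ∈ CBFS q n) (hw' : w' ∈ SetC q n) :
    ∀ u, u <+: w → u ≠ [] → u.length < w.length → ¬ u <:+ w' := by
  intro u hpre hne hlen hsuf
  obtain ⟨γ, hγ, -, rfl⟩ := hw'
  -- suffix side: vsum u ≤ -1
  have hneg : vsum u ≤ -1 := by
    obtain ⟨t, ht⟩ := hsuf
    obtain ⟨u', a, rfl⟩ : ∃ u' a, u = u' ++ [a] :=
      ⟨u.dropLast, u.getLast hne, (u.dropLast_append_getLast hne).symm⟩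
    rw [← List.append_assoc] at ht
    obtain ⟨hg, ha⟩ := List.append_inj' ht rfl
    have hp : 0 ≤ vsum t := hγ.2.2.1 t ⟨u', hg⟩
    have hsum : vsum t + vsum u' = 0 := by
      rw [← vsum_append, hg, hγ.2.2.2]
    have ha0 : a = 0 := by simpa using ha
    have h0 : vsum [(0 : ℕ)] = -1 := by simp [vsum, mval]
    rw [ha0, vsum_append, h0]
    linarith
  -- prefix side: 0 ≤ vsum u
  have hpos : 0 ≤ vsum u := by
    rcases hw with (hA | hB) | hC
    · obtain ⟨i, -, α, hα, β, hβ, rfl⟩ := hA.1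
      rcases prefix_append_cases hpre with h1 | ⟨v, hv, rfl⟩
      · exact hα.2.2.1 u h1
      · rw [vsum_append, hα.2.2.2]
        simpa using elevated_prefix_nonneg hβ hv
    · obtain ⟨i, -, α, hα, β, hβ, rfl⟩ := hB
      cases u with
      | nil => simp [vsum]
      | cons a t =>
        rw [List.cons_prefix_cons] at hpre
        obtain ⟨rfl, ht⟩ := hpre
        have h0 : 0 ≤ vsum t := by
          rcases prefix_append_cases ht with h1 | ⟨v, hv, rfl⟩
          · exact hα.2.2.1 t h1
          · rw [vsum_append, hα.2.2.2]
            simpa using elevated_prefix_nonneg hβ hv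
        have : vsum (1 :: t) = 1 + vsum t := by simp [vsum, mval]
        rw [this]; linarith
    · obtain ⟨γ', hγ', -, rfl⟩ := hC
      rcases prefix_append_cases hpre with h1 | ⟨v, hv, rfl⟩
      · exact hγ'.2.2.1 u h1
      · cases v with
        | nil => rw [List.append_nil]; exact hγ'.2.2.1 γ' List.prefix_rfl |>.trans_eq rfl
        | cons b tv =>
          rw [List.cons_prefix_cons] at hv
          obtain ⟨rfl, htv⟩ := hv
          simp [List.prefix_nil] at htv
          subst htv
          simp at hlen
  linarith
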